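/- Let ξ ∈ ℝ, α ∈ ℝ, and c > 0 with 6|α|c < 1, let φ̄(x) = (x−ξ)|x−ξ| φ((x−ξ)/c), and let G(x) = x + α φ̄(x) (a bijection of ℝ). Let σ: ℝ → ℝ be Lipschitz continuous. Then the transformed diffusion coefficient σ̃: ℝ → ℝ defined by σ̃(z) = σ(G⁻¹(z)) (1 + α φ̄'(G⁻¹(z))) is Lipschitz continuous on ℝ. -/

import Mathlib

open NNReal

/-- The bump function `φ(u) = (1+u)³(1-u)³` for `|u| ≤ 1` and `φ(u) = 0` otherwise. -/
noncomputable def phi (u : ℝ) : ℝ := if |u| ≤ 1 then (1 + u) ^ 3 * (1 - u) ^ 3 else 0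

/-- `φ̄(x) = (x-ξ)|x-ξ| φ((x-ξ)/c)`. -/
noncomputable def phibar (ξ c : ℝ) (x : ℝ) : ℝ := (x - ξ) * |x - ξ| * phi ((x - ξ) / c)

/-- The transform `G(x) = x + α φ̄(x)`. -/
noncomputable def transformG (ξ α c : ℝ) (x : ℝ) : ℝ := x + α * phibar ξ c x

open Asymptotics Filter

noncomputable def psi (ξ c : ℝ) (x : ℝ) : ℝ :=
  if |x - ξ| ≤ c then |x - ξ| * (1 - ((x-ξ)/c)^2)^2 * (2 - 8*((x-ξ)/c)^2) else 0


lemma sq_isLittleO (t : ℝ) : (fun s : ℝ => (s - t)^2) =o[nhds t] (fun s => s - t) := by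
  have h : HasDerivAt (fun s : ℝ => (s - t)^2) (2 * (t - t)^1 * 1) t :=
    ((hasDerivAt_id t).sub_const t).pow 2
  have := hasDerivAt_iff_isLittleO.mp h
  simpa using this

lemma hasDerivAt_mul_abs (t : ℝ) : HasDerivAt (fun s : ℝ => s * |s|) (2 * |t|) t := by
  rcases lt_trichotomy t 0 with ht | ht | ht
  · have h : HasDerivAt (fun s : ℝ => -(s * s)) (-(2*t)) t := by
      have := ((hasDerivAt_id t).mul (hasDerivAt_id t)).neg
      exact this.congr_deriv (by show -(1 * t + t * 1) = -(2*t); ring)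
    have he : (fun s : ℝ => -(s*s)) =ᶠ[nhds t] (fun s => s * |s|) := by
      filter_upwards [Iio_mem_nhds ht] with s hs
      rw [abs_of_neg hs]; ring
    have := h.congr_of_eventuallyEq he.symm
    refine this.congr_deriv (Eq.symm ?_)
    rw [abs_of_neg ht]; ring
  · subst ht
    rw [hasDerivAt_iff_isLittleO]
    simp only [abs_zero, mul_zero, zero_mul, sub_zero]
    have h1 : (fun s : ℝ => s * |s|) =O[nhds 0] (fun s => (s - 0)^2) := by
      apply IsBigO.of_bound 1
      filter_upwards with s
      simp [abs_mul, sq_abs, sq, abs_of_nonneg (mul_self_nonneg s)]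
    simpa using h1.trans_isLittleO (sq_isLittleO 0)
  · have h : HasDerivAt (fun s : ℝ => s * s) (2*t) t := by
      have := (hasDerivAt_id t).mul (hasDerivAt_id t)
      exact this.congr_deriv (by show 1 * t + t * 1 = 2*t; ring)
    have he : (fun s : ℝ => s*s) =ᶠ[nhds t] (fun s => s * |s|) := by
      filter_upwards [Ioi_mem_nhds ht] with s hs
      rw [abs_of_pos hs]
    have := h.congr_of_eventuallyEq he.symm
    refine this.congr_deriv (Eq.symm ?_)
    rw [abs_of_pos ht]

lemma phi_eq {u : ℝ} (hu : |u| ≤ 1) : phi u = (1 - u^2)^3 := by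
  rw [phi, if_pos hu]; ring

lemma phi_eq' {u : ℝ} (hu : 1 < |u|) : phi u = 0 := by
  rw [phi, if_neg (not_le.mpr hu)]

lemma hasDerivAt_phibar (ξ c : ℝ) (hc : 0 < c) (x : ℝ) :
    HasDerivAt (phibar ξ c) (psi ξ c x) x := by
  have hc0 : c ≠ 0 := ne_of_gt hc
  rcases lt_trichotomy |x - ξ| c with hlt | heq | hgt
  · -- interior case
    have h1 : HasDerivAt (fun y : ℝ => (y - ξ) * |y - ξ|) (2 * |x - ξ| * 1) x := by
      exact (hasDerivAt_mul_abs (x - ξ)).comp x ((hasDerivAt_id x).sub_const ξ)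
    set u0 := (x - ξ)/c with hu0
    have h2 : HasDerivAt (fun y : ℝ => (1 - ((y - ξ)/c)^2)^3)
        (3 * (1 - u0^2)^2 * (0 - 2*u0^1*1) * (1/c)) x := by
      have hi : HasDerivAt (fun y : ℝ => (y - ξ)/c) (1/c) x := by
        simpa using ((hasDerivAt_id x).sub_const ξ).div_const c
      have ho : HasDerivAt (fun u : ℝ => (1 - u^2)^3) (3 * (1 - u0^2)^2 * (0 - 2*u0^1*1)) u0 := by
        exact (((hasDerivAt_const u0 (1:ℝ)).sub ((hasDerivAt_id u0).pow 2)).pow 3)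
      exact ho.comp x hi
    have hprod := h1.mul h2
    have he : (fun y : ℝ => (y - ξ) * |y - ξ| * (1 - ((y - ξ)/c)^2)^3) =ᶠ[nhds x] phibar ξ c := by
      have hs : ∀ᶠ y in nhds x, |y - ξ| < c := by
        have : Continuous fun y : ℝ => |y - ξ| := by fun_prop
        exact this.continuousAt.eventually_lt continuousAt_const hlt
      filter_upwards [hs] with y hy
      rw [phibar, phi_eq]
      rw [abs_div, abs_of_pos hc, div_le_one hc]
      exact le_of_lt hy
    have := hprod.congr_of_eventuallyEq he.symm
    refine this.congr_deriv (Eq.symm ?_)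
    rw [psi, if_pos (le_of_lt hlt), hu0]
    field_simp
    ring
  · -- boundary case
    have hb0 : phibar ξ c x = 0 := by
      have hu : |(x - ξ)/c| = 1 := by rw [abs_div, abs_of_pos hc, heq, div_self hc0]
      have : phi ((x-ξ)/c) = 0 := by
        rw [phi_eq hu.le]
        have : ((x-ξ)/c)^2 = 1 := by rw [← sq_abs, hu]; norm_num
        rw [this]; ring
      rw [phibar, this, mul_zero]
    have hpsi0 : psi ξ c x = 0 := by
      rw [psi, if_pos heq.le]
      have : ((x-ξ)/c)^2 = 1 := by
        rw [div_pow, ← sq_abs, heq]; field_simp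
      rw [this]; ring
    rw [hasDerivAt_iff_isLittleO, hb0, hpsi0]
    simp only [smul_zero, sub_zero]
    have key : ∀ y : ℝ, |phibar ξ c y| ≤ (8/c) * |y - x|^3 := by
      intro y
      rcases le_or_gt |y - ξ| c with hy | hy
      · have hu : |(y - ξ)/c| ≤ 1 := by
          rw [abs_div, abs_of_pos hc, div_le_one hc]; exact hy
        rw [phibar, phi_eq hu]
        have h1 : |y - ξ| ≤ c := hy
        have h2 : (0:ℝ) ≤ 1 - ((y-ξ)/c)^2 := by
          have := sq_abs ((y-ξ)/c) ▸ pow_le_one₀ (abs_nonneg _) hu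
          nlinarith [sq_abs ((y-ξ)/c), abs_nonneg ((y-ξ)/c)]
        have h3 : 1 - ((y-ξ)/c)^2 ≤ 2 * |y - x| / c := by
          have htri : |x - ξ| - |y - ξ| ≤ |y - x| := by
            have := abs_sub_abs_le_abs_sub (x - ξ) (y - ξ)
            have h4 : |x - ξ - (y - ξ)| = |y - x| := by rw [abs_sub_comm]; ring_nf
            linarith [h4 ▸ this]
          have h5 : c - |y - ξ| ≤ |y - x| := by rw [← heq]; exact htri
          have h6 : 1 - ((y-ξ)/c)^2 = (c - |y-ξ|) * (c + |y-ξ|) / c^2 := by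
            field_simp
            linear_combination sq_abs (y - ξ)
          rw [h6, div_le_div_iff₀ (by positivity) hc]
          have hA : 0 ≤ c - |y - ξ| := by linarith
          have hB : c + |y - ξ| ≤ 2 * c := by linarith
          have h7 : (0:ℝ) ≤ (c + |y - ξ|) * c := by positivity
          nlinarith [mul_le_mul_of_nonneg_right h5 h7,
            mul_le_mul_of_nonneg_right
              (mul_le_mul_of_nonneg_left hB (abs_nonneg (y - x))) hc.le]
        have e1 : |(y - ξ) * |y - ξ| * (1 - ((y-ξ)/c)^2)^3|
            = |y - ξ|^2 * (1 - ((y-ξ)/c)^2)^3 := by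
          rw [abs_mul, abs_mul, abs_abs, abs_of_nonneg (pow_nonneg h2 3)]; ring
        rw [e1]
        calc |y - ξ|^2 * (1 - ((y-ξ)/c)^2)^3
            ≤ c^2 * (2*|y-x|/c)^3 := by
              apply mul_le_mul
              · exact pow_le_pow_left₀ (abs_nonneg _) hy 2
              · exact pow_le_pow_left₀ h2 h3 3
              · positivity
              · positivity
          _ = (8/c) * |y - x|^3 := by field_simp; ring
      · have : 1 < |(y - ξ)/c| := by
          rw [abs_div, abs_of_pos hc, lt_div_iff₀ hc]; linarith
        rw [phibar, phi_eq' this, mul_zero, abs_zero]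
        positivity
    have hO : (fun y : ℝ => phibar ξ c y) =O[nhds x] (fun y => (y - x)^2) := by
      apply IsBigO.of_bound (8/c)
      filter_upwards [Metric.ball_mem_nhds x one_pos] with y hy
      have hd : |y - x| < 1 := by rw [Metric.mem_ball, Real.dist_eq] at hy; exact hy
      calc ‖phibar ξ c y‖ ≤ (8/c) * |y - x|^3 := key y
        _ ≤ (8/c) * |y - x|^2 := by
            apply mul_le_mul_of_nonneg_left _ (by positivity)
            calc |y-x|^3 = |y-x|^2 * |y-x| := by ring
              _ ≤ |y-x|^2 * 1 := by
                  apply mul_le_mul_of_nonneg_left hd.le (by positivity)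
              _ = |y-x|^2 := mul_one _
        _ = (8/c) * ‖(y-x)^2‖ := by rw [Real.norm_eq_abs, abs_pow, sq_abs]
    exact hO.trans_isLittleO (sq_isLittleO x)
  · -- exterior case
    have he : (fun _ : ℝ => (0:ℝ)) =ᶠ[nhds x] phibar ξ c := by
      have hs : ∀ᶠ y in nhds x, c < |y - ξ| := by
        have : Continuous fun y : ℝ => |y - ξ| := by fun_prop
        exact continuousAt_const.eventually_lt this.continuousAt hgt
      filter_upwards [hs] with y hy
      have : 1 < |(y - ξ)/c| := by
        rw [abs_div, abs_of_pos hc, lt_div_iff₀ hc]; linarith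
      rw [phibar, phi_eq' this, mul_zero]
    have := (hasDerivAt_const x (0:ℝ)).congr_of_eventuallyEq he.symm
    have hpsi0 : psi ξ c x = 0 := by rw [psi, if_neg (not_le.mpr hgt)]
    rw [hpsi0]
    exact this

lemma PP_bound {s : ℝ} (h : s^2 ≤ 1) : |(1-s^2)^2*(2-8*s^2)| ≤ 6 := by
  rw [abs_le]
  constructor <;> nlinarith [sq_nonneg (1-s^2), sq_nonneg s, sq_nonneg (s^2), sq_nonneg (1-s^2-s^2)]

lemma PP_lip {s t : ℝ} (hs : s^2 ≤ 1) (ht : t^2 ≤ 1) :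
    |(1-s^2)^2*(2-8*s^2) - (1-t^2)^2*(2-8*t^2)| ≤ 144*|s-t| := by
  have key : (1-s^2)^2*(2-8*s^2) - (1-t^2)^2*(2-8*t^2)
      = (s-t)*((s+t)*(-12+18*(s^2+t^2)-8*(s^4+s^2*t^2+t^4))) := by ring
  rw [key, abs_mul, mul_comm 144 (|s-t|)]
  apply mul_le_mul_of_nonneg_left _ (abs_nonneg _)
  have hs1 : |s| ≤ 1 := abs_le.mpr ⟨by nlinarith, by nlinarith⟩
  have ht1 : |t| ≤ 1 := abs_le.mpr ⟨by nlinarith, by nlinarith⟩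
  rw [abs_mul]
  have h1 : |s+t| ≤ 2 := (abs_add_le s t).trans (by linarith)
  have h2 : |(-12+18*(s^2+t^2)-8*(s^4+s^2*t^2+t^4))| ≤ 72 := by
    rw [abs_le]
    constructor <;> nlinarith [sq_nonneg (s*t), sq_nonneg (s^2-t^2), sq_nonneg (s^2+t^2), mul_nonneg (sq_nonneg s) (sq_nonneg t)]
  calc |s+t| * |(-12+18*(s^2+t^2)-8*(s^4+s^2*t^2+t^4))| ≤ 2 * 72 :=
        mul_le_mul h1 h2 (abs_nonneg _) (by norm_num)
    _ ≤ 144 := by norm_num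

lemma psi_bound (ξ c : ℝ) (hc : 0 < c) (x : ℝ) : |psi ξ c x| ≤ 6 * c := by
  rw [psi]
  split_ifs with h
  · set u := (x-ξ)/c with hu
    have hu2 : u^2 ≤ 1 := by
      rw [hu, div_pow, div_le_one (by positivity), ← sq_abs]
      nlinarith [abs_nonneg (x-ξ)]
    have e : |(|x-ξ|) * (1-u^2)^2 * (2-8*u^2)| = |x-ξ| * |(1-u^2)^2*(2-8*u^2)| := by
      rw [mul_assoc, abs_mul, abs_abs]
    rw [e]
    calc |x-ξ| * |(1-u^2)^2*(2-8*u^2)| ≤ c * 6 :=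
          mul_le_mul h (PP_bound hu2) (abs_nonneg _) hc.le
      _ = 6 * c := by ring
  · rw [abs_zero]; positivity

lemma psi_lip_in (ξ c : ℝ) (hc : 0 < c) {a b : ℝ} (ha : |a - ξ| ≤ c) (hb : |b - ξ| ≤ c) :
    |psi ξ c a - psi ξ c b| ≤ 150 * |a - b| := by
  set s := (a-ξ)/c
  set t := (b-ξ)/c
  have hs2 : s^2 ≤ 1 := by
    rw [div_pow, div_le_one (by positivity), ← sq_abs]
    nlinarith [abs_nonneg (a-ξ)]
  have ht2 : t^2 ≤ 1 := by
    rw [div_pow, div_le_one (by positivity), ← sq_abs]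
    nlinarith [abs_nonneg (b-ξ)]
  rw [psi, psi, if_pos ha, if_pos hb]
  have key : (|a-ξ|) * (1 - s^2)^2 * (2-8*s^2) - (|b-ξ|) * (1 - t^2)^2 * (2-8*t^2)
      = (|a-ξ| - |b-ξ|) * ((1-s^2)^2*(2-8*s^2))
        + |b-ξ| * ((1-s^2)^2*(2-8*s^2) - (1-t^2)^2*(2-8*t^2)) := by ring
  rw [key]
  have hst : |s - t| = |a - b| / c := by
    have h : s - t = (a - b)/c := by
      show (a-ξ)/c - (b-ξ)/c = (a-b)/c
      rw [div_sub_div_same]; congr 1; ring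
    rw [h, abs_div, abs_of_pos hc]
  have h1 : |(|a-ξ| - |b-ξ|)| ≤ |a - b| := by
    have := abs_abs_sub_abs_le_abs_sub (a - ξ) (b - ξ)
    have e : a - ξ - (b - ξ) = a - b := by ring
    rwa [e] at this
  calc |(|a-ξ| - |b-ξ|) * ((1-s^2)^2*(2-8*s^2))
        + |b-ξ| * ((1-s^2)^2*(2-8*s^2) - (1-t^2)^2*(2-8*t^2))|
      ≤ |(|a-ξ| - |b-ξ|)| * |(1-s^2)^2*(2-8*s^2)|
        + |b-ξ| * |(1-s^2)^2*(2-8*s^2) - (1-t^2)^2*(2-8*t^2)| := by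
        refine (abs_add_le _ _).trans ?_
        apply add_le_add
        · exact le_of_eq (abs_mul _ _)
        · exact le_of_eq (by rw [abs_mul, abs_abs])
    _ ≤ |a - b| * 6 + c * (144 * (|a-b|/c)) := by
        apply add_le_add
        · exact mul_le_mul h1 (PP_bound hs2) (abs_nonneg _) (abs_nonneg _)
        · rw [← hst]
          exact mul_le_mul hb (PP_lip hs2 ht2) (abs_nonneg _) hc.le
    _ = 150 * |a - b| := by field_simp; ring

lemma psi_lip_cross (ξ c : ℝ) (hc : 0 < c) {a b : ℝ} (ha : |a - ξ| ≤ c) (hb : c < |b - ξ|) :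
    |psi ξ c a - psi ξ c b| ≤ 150 * |a - b| := by
  rw [psi, psi, if_pos ha, if_neg (not_le.mpr hb), sub_zero]
  set s := (a-ξ)/c with hsdef
  have hs2 : s^2 ≤ 1 := by
    rw [hsdef, div_pow, div_le_one (by positivity), ← sq_abs]
    nlinarith [abs_nonneg (a-ξ)]
  have hba : c - |a - ξ| ≤ |a - b| := by
    have h := abs_abs_sub_abs_le_abs_sub (b - ξ) (a - ξ)
    have e : b - ξ - (a - ξ) = -(a - b) := by ring
    rw [e, abs_neg] at h
    have := abs_sub_abs_le_abs_sub (b - ξ) (a - ξ)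
    calc c - |a-ξ| ≤ |b-ξ| - |a-ξ| := by linarith
      _ ≤ |b - ξ - (a - ξ)| := abs_sub_abs_le_abs_sub _ _
      _ = |a - b| := by rw [show b - ξ - (a - ξ) = -(a-b) by ring, abs_neg]
  have h1ms : 0 ≤ 1 - s^2 := by linarith
  have hkey : c * (1 - s^2) ≤ 2 * |a - b| := by
    have e : 1 - s^2 = (c - |a-ξ|) * (c + |a-ξ|) / c^2 := by
      rw [hsdef]
      field_simp
      linear_combination sq_abs (a - ξ)
    have e3 : c * ((c - |a-ξ|) * (c + |a-ξ|) / c^2) = (c - |a-ξ|) * (c + |a-ξ|) / c := by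
      field_simp
    rw [e, e3, div_le_iff₀ hc]
    nlinarith [abs_nonneg (a - ξ), abs_nonneg (a - b),
      mul_le_mul_of_nonneg_right hba (by positivity : (0:ℝ) ≤ c + |a-ξ|)]
  have e2 : |(|a-ξ|) * (1 - s^2)^2 * (2-8*s^2)| = |a-ξ| * (1-s^2)^2 * |2-8*s^2| := by
    rw [abs_mul, abs_mul, abs_abs, abs_pow, sq_abs]
  rw [e2]
  have h6 : |2 - 8*s^2| ≤ 6 := by
    rw [abs_le]
    constructor <;> nlinarith [sq_nonneg s]
  calc |a-ξ| * (1-s^2)^2 * |2-8*s^2| ≤ (c * (1 - s^2)) * 6 := by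
        have h9 : (1-s^2)^2 ≤ 1-s^2 := by nlinarith
        have h10 : |a-ξ| * (1-s^2)^2 ≤ c * (1-s^2) :=
          mul_le_mul ha h9 (sq_nonneg _) hc.le
        exact mul_le_mul h10 h6 (abs_nonneg _) (mul_nonneg hc.le h1ms)
    _ ≤ (2 * |a - b|) * 6 := mul_le_mul_of_nonneg_right hkey (by norm_num)
    _ ≤ 150 * |a - b| := by nlinarith [abs_nonneg (a-b)]

lemma psi_lip (ξ c : ℝ) (hc : 0 < c) (a b : ℝ) :
    |psi ξ c a - psi ξ c b| ≤ 150 * |a - b| := by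
  rcases le_or_gt |a - ξ| c with ha | ha <;> rcases le_or_gt |b - ξ| c with hb | hb
  · exact psi_lip_in ξ c hc ha hb
  · exact psi_lip_cross ξ c hc ha hb
  · rw [abs_sub_comm, abs_sub_comm a b]
    exact psi_lip_cross ξ c hc hb ha
  · rw [psi, psi, if_neg (not_le.mpr ha), if_neg (not_le.mpr hb), sub_zero, abs_zero]
    positivity

lemma phibar_bound (ξ c : ℝ) (hc : 0 < c) (x : ℝ) : |phibar ξ c x| ≤ c^2 := by
  rcases le_or_gt |x - ξ| c with h | h
  · have hu : |(x - ξ)/c| ≤ 1 := by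
      rw [abs_div, abs_of_pos hc, div_le_one hc]; exact h
    have hu2 : ((x-ξ)/c)^2 ≤ 1 := by rw [← sq_abs]; nlinarith [abs_nonneg ((x-ξ)/c)]
    have h2 : (0:ℝ) ≤ 1 - ((x-ξ)/c)^2 := by linarith
    rw [phibar, phi_eq hu]
    have e : |(x - ξ) * |x - ξ| * (1 - ((x-ξ)/c)^2)^3|
        = |x - ξ|^2 * (1 - ((x-ξ)/c)^2)^3 := by
      rw [abs_mul, abs_mul, abs_abs, abs_pow, abs_of_nonneg h2]; ring
    rw [e]
    have h3 : (1 - ((x-ξ)/c)^2)^3 ≤ 1 := by nlinarith [sq_nonneg ((x-ξ)/c), sq_nonneg (1 - ((x-ξ)/c)^2)]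
    have h4 : |x-ξ|^2 ≤ c^2 := by nlinarith [abs_nonneg (x-ξ)]
    nlinarith [sq_nonneg (x-ξ), abs_nonneg (x-ξ), pow_nonneg h2 3]
  · have : 1 < |(x - ξ)/c| := by
      rw [abs_div, abs_of_pos hc, lt_div_iff₀ hc]; linarith
    rw [phibar, phi_eq' this, mul_zero, abs_zero]
    positivity

lemma phibar_lip (ξ c : ℝ) (hc : 0 < c) (z w : ℝ) :
    |phibar ξ c z - phibar ξ c w| ≤ 6 * c * |z - w| := by
  have hdiff : Differentiable ℝ (phibar ξ c) :=
    fun x => (hasDerivAt_phibar ξ c hc x).differentiableAt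
  have hL : LipschitzWith (Real.toNNReal (6 * c)) (phibar ξ c) := by
    apply lipschitzWith_of_nnnorm_deriv_le hdiff
    intro x
    rw [← NNReal.coe_le_coe, coe_nnnorm, Real.norm_eq_abs,
      Real.coe_toNNReal _ (by positivity), (hasDerivAt_phibar ξ c hc x).deriv]
    exact psi_bound ξ c hc x
  have := hL.dist_le_mul z w
  rwa [Real.dist_eq, Real.dist_eq, Real.coe_toNNReal _ (by positivity)] at this

/-- if `σ` is Lipschitz, the transformed diffusion coefficient
`σ̃(z) = σ(G⁻¹(z))(1 + α φ̄'(G⁻¹(z)))` is Lipschitz continuous on `ℝ`. -/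
theorem transformed_diffusion_lipschitz
    (ξ α c : ℝ) (hc : 0 < c) (hαc : 6 * |α| * c < 1)
    (σ : ℝ → ℝ) (Lσ : ℝ≥0) (hσ : LipschitzWith Lσ σ) :
    ∃ K : ℝ≥0, LipschitzWith K (fun z : ℝ =>
      σ (Function.invFun (transformG ξ α c) z)
        * (1 + α * deriv (phibar ξ c) (Function.invFun (transformG ξ α c) z))) := by
  have hderiv : deriv (phibar ξ c) = psi ξ c :=
    funext fun x => (hasDerivAt_phibar ξ c hc x).deriv
  set m : ℝ := 1 - 6 * |α| * c with hm
  have hm0 : 0 < m := by simp only [hm]; linarith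
  set G := transformG ξ α c with hG
  set g := Function.invFun G with hg
  -- strong monotonicity of G
  have hσR : ∀ a b : ℝ, |σ a - σ b| ≤ (Lσ : ℝ) * |a - b| := by
    intro a b
    have := hσ.dist_le_mul a b
    rwa [Real.dist_eq, Real.dist_eq] at this
  have hmono : ∀ z w : ℝ, m * |z - w| ≤ |G z - G w| := by
    intro z w
    have h1 : |α * phibar ξ c z - α * phibar ξ c w| ≤ 6 * |α| * c * |z - w| := by
      calc |α * phibar ξ c z - α * phibar ξ c w| = |α| * |phibar ξ c z - phibar ξ c w| := by
            rw [← abs_mul]; congr 1; ring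
        _ ≤ |α| * (6 * c * |z - w|) :=
            mul_le_mul_of_nonneg_left (phibar_lip ξ c hc z w) (abs_nonneg α)
        _ = 6 * |α| * c * |z - w| := by ring
    have h2 : |z - w| ≤ |G z - G w| + |α * phibar ξ c z - α * phibar ξ c w| := by
      have e : z - w = (G z - G w) - (α * phibar ξ c z - α * phibar ξ c w) := by
        simp only [hG, transformG]; ring
      rw [e]
      exact abs_sub _ _
    have h3 : (6 * |α| * c) * |z - w| ≤ (6 * |α| * c) * |z - w| := le_refl _
    nlinarith [abs_nonneg (z - w)]
  -- surjectivity of G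
  have hdiff : Differentiable ℝ (phibar ξ c) :=
    fun x => (hasDerivAt_phibar ξ c hc x).differentiableAt
  have hcont : Continuous G := by
    have : Continuous (phibar ξ c) := hdiff.continuous
    exact continuous_id.add (continuous_const.mul this)
  have habs : ∀ x, |α * phibar ξ c x| ≤ |α| * c^2 := by
    intro x
    rw [abs_mul]
    exact mul_le_mul_of_nonneg_left (phibar_bound ξ c hc x) (abs_nonneg α)
  have htop : Tendsto G atTop atTop := by
    apply tendsto_atTop_mono (fun x => ?_) (tendsto_atTop_add_const_right atTop (-(|α| * c^2)) tendsto_id)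
    have := habs x
    have := abs_le.mp this
    simp only [hG, transformG, id]
    linarith [this.1]
  have hbot : Tendsto G atBot atBot := by
    apply tendsto_atBot_mono (fun x => ?_) (tendsto_atBot_add_const_right atBot (|α| * c^2) tendsto_id)
    have := abs_le.mp (habs x)
    simp only [hG, transformG, id]
    linarith [this.2]
  have hsurj : Function.Surjective G := hcont.surjective htop hbot
  have hGg : ∀ z, G (g z) = z := fun z => Function.rightInverse_invFun hsurj z
  -- Lipschitz of g
  have hglip : ∀ z w : ℝ, |g z - g w| ≤ (1/m) * |z - w| := by
    intro z w
    have := hmono (g z) (g w)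
    rw [hGg, hGg] at this
    rw [div_mul_eq_mul_div, le_div_iff₀ hm0]
    linarith
  -- bound on σ near ξ
  set M : ℝ := |σ ξ| + (Lσ : ℝ) * c with hM
  have hσM : ∀ y, |y - ξ| ≤ c → |σ y| ≤ M := by
    intro y hy
    have h1 : |σ y - σ ξ| ≤ (Lσ : ℝ) * |y - ξ| := hσR y ξ
    have h2 : (Lσ : ℝ) * |y - ξ| ≤ (Lσ : ℝ) * c :=
      mul_le_mul_of_nonneg_left hy Lσ.coe_nonneg
    calc |σ y| = |(σ y - σ ξ) + σ ξ| := by ring_nf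
      _ ≤ |σ y - σ ξ| + |σ ξ| := abs_add_le _ _
      _ ≤ M := by rw [hM]; linarith
  -- product estimate
  set CP : ℝ := 6 * c * (Lσ : ℝ) + M * 150 with hCP
  have haux : ∀ x y : ℝ, |y - ξ| ≤ c →
      |σ x * psi ξ c x - σ y * psi ξ c y| ≤ CP * |x - y| := by
    intro x y hy
    have e : σ x * psi ξ c x - σ y * psi ξ c y
        = (σ x - σ y) * psi ξ c x + σ y * (psi ξ c x - psi ξ c y) := by ring
    rw [e]
    calc |(σ x - σ y) * psi ξ c x + σ y * (psi ξ c x - psi ξ c y)|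
        ≤ |σ x - σ y| * |psi ξ c x| + |σ y| * |psi ξ c x - psi ξ c y| := by
          refine (abs_add_le _ _).trans ?_
          rw [abs_mul, abs_mul]
      _ ≤ ((Lσ : ℝ) * |x - y|) * (6 * c) + M * (150 * |x - y|) := by
          apply add_le_add
          · exact mul_le_mul (hσR x y) (psi_bound ξ c hc x) (abs_nonneg _)
              (mul_nonneg Lσ.coe_nonneg (abs_nonneg _))
          · exact mul_le_mul (hσM y hy) (psi_lip ξ c hc x y) (abs_nonneg _)
              (le_trans (abs_nonneg _) (hσM ξ (by simp [abs_nonneg, hc.le])))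
      _ = CP * |x - y| := by rw [hCP]; ring
  have hkey : ∀ x y : ℝ, |σ x * psi ξ c x - σ y * psi ξ c y| ≤ CP * |x - y| := by
    intro x y
    by_cases hy : |y - ξ| ≤ c
    · exact haux x y hy
    · by_cases hx : |x - ξ| ≤ c
      · rw [abs_sub_comm, abs_sub_comm x y]
        exact haux y x hx
      · have h1 : psi ξ c x = 0 := by rw [psi, if_neg hx]
        have h2 : psi ξ c y = 0 := by rw [psi, if_neg hy]
        rw [h1, h2]
        simp only [mul_zero, sub_zero, abs_zero]
        positivity
  -- final estimate
  have hCP0 : 0 ≤ CP := by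
    rw [hCP, hM]
    positivity
  set KF : ℝ := (Lσ : ℝ) + |α| * CP with hKF
  have hKF0 : 0 ≤ KF := by rw [hKF]; positivity
  have hfinal : ∀ z w : ℝ,
      |σ (g z) * (1 + α * psi ξ c (g z)) - σ (g w) * (1 + α * psi ξ c (g w))|
        ≤ (KF * (1/m)) * |z - w| := by
    intro z w
    have e : σ (g z) * (1 + α * psi ξ c (g z)) - σ (g w) * (1 + α * psi ξ c (g w))
        = (σ (g z) - σ (g w)) + α * (σ (g z) * psi ξ c (g z) - σ (g w) * psi ξ c (g w)) := by
      ring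
    have h1 : |σ (g z) * (1 + α * psi ξ c (g z)) - σ (g w) * (1 + α * psi ξ c (g w))|
        ≤ (Lσ : ℝ) * |g z - g w| + |α| * (CP * |g z - g w|) := by
      rw [e]
      refine (abs_add_le _ _).trans ?_
      apply add_le_add (hσR _ _)
      rw [abs_mul]
      exact mul_le_mul_of_nonneg_left (hkey _ _) (abs_nonneg α)
    have h2 : |g z - g w| ≤ (1/m) * |z - w| := hglip z w
    calc |σ (g z) * (1 + α * psi ξ c (g z)) - σ (g w) * (1 + α * psi ξ c (g w))|
        ≤ (Lσ : ℝ) * |g z - g w| + |α| * (CP * |g z - g w|) := h1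
      _ ≤ (Lσ : ℝ) * ((1/m) * |z - w|) + |α| * (CP * ((1/m) * |z - w|)) := by
          apply add_le_add
          · exact mul_le_mul_of_nonneg_left h2 Lσ.coe_nonneg
          · apply mul_le_mul_of_nonneg_left _ (abs_nonneg α)
            exact mul_le_mul_of_nonneg_left h2 hCP0
      _ = (KF * (1/m)) * |z - w| := by rw [hKF]; ring
  refine ⟨Real.toNNReal (KF * (1/m)), ?_⟩
  rw [hderiv]
  apply LipschitzWith.of_dist_le_mul
  intro z w
  rw [Real.dist_eq, Real.dist_eq, Real.coe_toNNReal _ (by positivity)]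
  exact hfinal z w
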